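/- Let G be a group, x an element of (G,*) where G carries the BCH group structure of a finite-dimensional nilpotent Lie algebra over ℝ or ℚ_p. Then for all n ∈ ℤ, the n-th group power x^n (computed with BCH multiplication) equals the scalar multiple n·x. Consequently the group (𝔤,*) is torsion-free and every element is uniquely divisible. -/

import Mathlib

open scoped Topology

/-- `m` is the Baker–Campbell–Hausdorff multiplication on the Lie algebra `𝔤` over `𝕂`,
characterized by its properties (see the paper): continuity, associativity, neutral
element `0` (with inversion `x ↦ -x`), agreement with addition on commuting elements, and
recovery of the bracket from rescaled group commutators. -/
def IsBCHMul (𝕂 : Type*) [NontriviallyNormedField 𝕂] {𝔤 : Type*}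
    [NormedAddCommGroup 𝔤] [NormedSpace 𝕂 𝔤] [LieRing 𝔤] [LieAlgebra 𝕂 𝔤]
    (m : 𝔤 → 𝔤 → 𝔤) : Prop :=
  Continuous (fun p : 𝔤 × 𝔤 => m p.1 p.2) ∧
  (∀ x y z : 𝔤, m (m x y) z = m x (m y z)) ∧
  (∀ x : 𝔤, m x 0 = x) ∧ (∀ x : 𝔤, m 0 x = x) ∧
  (∀ x y : 𝔤, ⁅x, y⁆ = 0 → m x y = x + y) ∧
  (∀ x y : 𝔤, Filter.Tendsto
    (fun t : 𝕂 => (t⁻¹ * t⁻¹) • m (m (t • x) (t • y)) (m (-(t • x)) (-(t • y))))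
    (𝓝[≠] (0 : 𝕂)) (𝓝 ⁅x, y⁆))

/-- `n`-th power of `x` in the group `(𝔤, m)`. -/
def bchPow {𝔤 : Type*} [AddCommGroup 𝔤] (m : 𝔤 → 𝔤 → 𝔤) (x : 𝔤) : ℕ → 𝔤
  | 0 => 0
  | n + 1 => m x (bchPow m x n)

/-- `n`-th power of `x` in the group `(𝔤, m)` for `n : ℤ` (the group inverse of `x` in a
BCH group is `-x`). -/
def bchZPow {𝔤 : Type*} [AddCommGroup 𝔤] (m : 𝔤 → 𝔤 → 𝔤) (x : 𝔤) : ℤ → 𝔤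
  | Int.ofNat n => bchPow m x n
  | Int.negSucc n => bchPow m (-x) (n + 1)


private lemma bch_self_aux {G : Type*} [LieRing G] (x y : G) : ⁅x, x⁆ = ⁅y, y⁆ := by
  rw [lie_self, lie_self]

private lemma bch_skew_aux {K : Type*} [CommRing K] {G : Type*} [LieRing G] [LieAlgebra K G]
    (h2 : ∃ c : K, c * 2 = 1) (x y : G) (h : ⁅x, y⁆ = ⁅y, x⁆) : ⁅x, y⁆ = ⁅x, x⁆ := by
  obtain ⟨c, hc⟩ := h2
  have hb : ⁅x, y⁆ + ⁅x, y⁆ = 0 := by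
    nth_rewrite 2 [h]
    rw [← lie_skew x y, neg_add_cancel]
  rw [lie_self]
  calc ⁅x, y⁆ = (1 : K) • ⁅x, y⁆ := (one_smul K _).symm
    _ = (c * 2) • ⁅x, y⁆ := by rw [hc]
    _ = c • ((2 : K) • ⁅x, y⁆) := by rw [mul_smul]
    _ = c • (⁅x, y⁆ + ⁅x, y⁆) := by rw [two_smul]
    _ = c • (0 : G) := by rw [hb]
    _ = 0 := smul_zero c

/-- In the BCH group `(𝔤, *)` of a finite-dimensional nilpotent Lie
algebra over `ℝ` or `ℚ_p` (formalized: a nontrivially normed field of characteristic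
zero), the `n`-th group power of `x` equals `n • x` for all `n : ℤ`. Consequently the
group `(𝔤, *)` is torsion-free and every element is uniquely divisible. -/
theorem stmt9 {𝕂 : Type*} [NontriviallyNormedField 𝕂] [CharZero 𝕂]
    {𝔤 : Type*}
    [NormedAddCommGroup 𝔤] [NormedSpace 𝕂 𝔤] [LieRing 𝔤] [LieAlgebra 𝕂 𝔤]
    [FiniteDimensional 𝕂 𝔤] [LieRing.IsNilpotent 𝔤]
    (m : 𝔤 → 𝔤 → 𝔤) (hm : IsBCHMul 𝕂 m) :
    (∀ (x : 𝔤) (n : ℤ), bchZPow m x n = n • x) ∧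
    (∀ (x : 𝔤) (n : ℕ), 0 < n → bchPow m x n = 0 → x = 0) ∧
    (∀ (g : 𝔤) (n : ℕ), 0 < n → ∃! h : 𝔤, bchPow m h n = g) := by
  obtain ⟨hcont, hassoc, hr, hl, hadd, hlim⟩ := hm
  -- generic smul helpers (avoiding typeclass diamonds)
  have hneg : ∀ (v : 𝔤) (n : ℕ), n • (-v) = -(n • v) := by
    intro v n
    induction n with
    | zero => simp
    | succ k ih => rw [succ_nsmul, succ_nsmul, ih, neg_add]
  have hsc : ∀ (t : 𝕂) (n : ℕ) (v : 𝔤), t • (n • v) = n • (t • v) := by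
    intro t n v
    induction n with
    | zero => simp
    | succ k ih => rw [succ_nsmul, succ_nsmul, smul_add, ih]
  -- the zero of the Lie ring coincides with the zero of the normed group
  have hzz : ⁅(0 : 𝔤), (0 : 𝔤)⁆ = (0 : 𝔤) := by
    have h1 := hlim (0 : 𝔤) (0 : 𝔤)
    have e : ∀ t : 𝕂, (0 : 𝔤)
        = (t⁻¹ * t⁻¹) • m (m (t • (0:𝔤)) (t • (0:𝔤))) (m (-(t • (0:𝔤))) (-(t • (0:𝔤)))) := by
      intro t; simp [hr]
    exact (tendsto_nhds_unique (tendsto_const_nhds.congr e) h1).symm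
  have hself0 : ∀ v : 𝔤, ⁅v, v⁆ = 0 := fun v => (bch_self_aux v 0).trans hzz
  -- the key multiplicative law on powers
  have H : ∀ (n : ℕ) (w : 𝔤), m w (n • w) = (n + 1) • w ∧ m (n • w) w = (n + 1) • w := by
    intro n
    induction n using Nat.strong_induction_on with
    | _ n IH =>
      cases n with
      | zero =>
        intro w
        constructor <;> simp [zero_nsmul, one_nsmul, hr, hl]
      | succ K =>
        intro w
        have chain : ∀ z : 𝔤, ∀ i j : ℕ, 1 ≤ j → i + j = K + 1 →
            m ((i + 1) • z) (j • z) = m z ((K + 1) • z) := by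
          intro z i
          induction i with
          | zero =>
            intro j h1 h2
            have hj : j = K + 1 := by omega
            subst hj
            rw [one_nsmul]
          | succ i ih =>
            intro j h1 h2
            have e1 : m z (j • z) = (j + 1) • z := (IH j (by omega) z).1
            have e2 : m ((i + 1) • z) z = (i + 1 + 1) • z := (IH (i + 1) (by omega) z).2
            have e3 := ih (j + 1) (by omega) (by omega)
            rw [← e3, ← e1, ← hassoc, e2]
        have comm : ∀ z : 𝔤, m z ((K + 1) • z) = m ((K + 1) • z) z := by
          intro z
          have h := chain z K 1 le_rfl (by omega)
          rw [one_nsmul] at h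
          exact h.symm
        have heq : ⁅w, (K + 1) • w⁆ = ⁅(K + 1) • w, w⁆ := by
          refine tendsto_nhds_unique (hlim w ((K + 1) • w)) (Filter.Tendsto.congr ?_
            (hlim ((K + 1) • w) w))
          intro t
          rw [hsc t (K + 1) w, ← hneg (t • w) (K + 1), ← comm (t • w), ← comm (-(t • w))]
        have hbr : ⁅w, (K + 1) • w⁆ = 0 := by
          have h0 := bch_skew_aux (K := 𝕂) ⟨(2 : 𝕂)⁻¹, by norm_num⟩ w ((K + 1) • w) heq
          rw [h0]
          exact hself0 w
        constructor
        · rw [hadd w ((K + 1) • w) hbr, succ_nsmul w (K + 1)]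
          exact add_comm _ _
        · rw [← comm w, hadd w ((K + 1) • w) hbr, succ_nsmul w (K + 1)]
          exact add_comm _ _
  have hpow : ∀ (x : 𝔤) (n : ℕ), bchPow m x n = n • x := by
    intro x n
    induction n with
    | zero => simp [bchPow]
    | succ k ih =>
      show m x (bchPow m x k) = (k + 1) • x
      rw [ih, (H k x).1]
  have hsmul : ∀ (x : 𝔤) (n : ℕ), (n : ℕ) • x = ((n : 𝕂)) • x := by
    intro x n; rw [Nat.cast_smul_eq_nsmul]
  refine ⟨?_, ?_, ?_⟩
  · intro x n
    cases n with
    | ofNat k => show bchPow m x k = _; simpa using hpow x k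
    | negSucc k =>
      show bchPow m (-x) (k + 1) = _
      rw [hpow]
      simp [negSucc_zsmul, neg_nsmul]
  · intro x n hn h0
    rw [hpow, hsmul] at h0
    rcases smul_eq_zero.mp h0 with h | h
    · exact absurd (Nat.cast_injective (R := 𝕂) (by simpa using h) : n = 0) hn.ne'
    · exact h
  · intro g n hn
    have hne : (n : 𝕂) ≠ 0 := Nat.cast_ne_zero.mpr hn.ne'
    refine ⟨(n : 𝕂)⁻¹ • g, ?_, ?_⟩
    · show bchPow m ((n : 𝕂)⁻¹ • g) n = g
      rw [hpow, hsmul, smul_smul, mul_inv_cancel₀ hne, one_smul]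
    · intro y hy
      rw [hpow, hsmul] at hy
      rw [← hy, smul_smul, inv_mul_cancel₀ hne, one_smul]
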